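/- Let k be a field, G a finite group, and P a finite G-poset. There is a k-algebra isomorphism k(G∝P) ≅ kP[G] between the category algebra of the transporter category and the skew group algebra of G over the incidence algebra kP, given on basis elements by (g, gx ≤ y) ↦ (gx ≤ y) ⊗ g. -/

import Mathlib

open CategoryTheory

/-- The transporter category `G ∝ P` of a `G`-poset `P`, the action being given
by a homomorphism `φ : G →* (P ≃o P)`.  Objects are those of `P`. -/
def Transporter (G : Type*) [Group G] (P : Type*) [PartialOrder P]
    (φ : G →* (P ≃o P)) : Type _ := P

namespace Transporter

variable {G : Type*} [Group G] {P : Type*} [PartialOrder P] (φ : G →* (P ≃o P))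

/-- A morphism `x ⟶ y` in `G ∝ P` is a pair `(g, gx ≤ y)`;
composition is `(h, hy ≤ z) ∘ (g, gx ≤ y) = (hg, (hg)x ≤ z)`. -/
instance : Category (Transporter G P φ) where
  Hom x y := { g : G // φ g (x : P) ≤ (y : P) }
  id x := ⟨1, by simp; exact le_rfl⟩
  comp {x y z} f g := ⟨g.1 * f.1, by
    have h1 : φ g.1 (φ f.1 (x : P)) ≤ φ g.1 (y : P) := (φ g.1).monotone f.2
    have h2 : φ (g.1 * f.1) (x : P) = φ g.1 (φ f.1 (x : P)) := by
      rw [map_mul]; rfl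
    exact h2 ▸ le_trans h1 g.2⟩
  id_comp f := Subtype.ext (mul_one _)
  comp_id f := Subtype.ext (one_mul _)
  assoc f g h := Subtype.ext (mul_assoc _ _ _).symm

end Transporter

/-- The set of morphisms of `C`, the basis of the category algebra. -/
abbrev CatMor (C : Type*) [CategoryTheory.Category C] := Σ x y : C, x ⟶ y

/-- The underlying vector space of the category algebra `kC`: functions on `Mor C`. -/
def CatAlgebra (k : Type*) (C : Type*) [CategoryTheory.Category C] := CatMor C → k

section CatAlgebra

open CategoryTheory

variable (k : Type*) [Field k] (C : Type*) [Category C] [Fintype C] [DecidableEq C]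
  [∀ x y : C, Fintype (x ⟶ y)] [∀ x y : C, DecidableEq (x ⟶ y)]

instance : AddCommGroup (CatAlgebra k C) := Pi.addCommGroup
instance : Module k (CatAlgebra k C) := Pi.module _ _ _

variable {k C}

/-- The basis element of the category algebra corresponding to a morphism. -/
def catSingle (m : CatMor C) : CatAlgebra k C := Pi.single m 1

/-- The convolution product of the category algebra: on basis elements,
`α * β = α ∘ β` if composable and `0` otherwise. -/
def catMul (a b : CatAlgebra k C) : CatAlgebra k C := fun m =>
  ∑ p : CatMor C, ∑ q : CatMor C,
    if h : q.2.1 = p.1 then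
      (if (⟨q.1, p.2.1, (q.2.2 ≫ eqToHom h) ≫ p.2.2⟩ : CatMor C) = m then a p * b q else 0)
    else 0

/-- The identity element `1 = ∑_{x ∈ Ob C} 1_x` of the category algebra. -/
def catOne : CatAlgebra k C := ∑ x : C, catSingle ⟨x, x, 𝟙 x⟩

end CatAlgebra

open CategoryTheory

section Skew

variable {k : Type*} [Field k] {G : Type*} [Group G] [Fintype G] [DecidableEq G]
  {P : Type*} [PartialOrder P] [Fintype P] [DecidableEq P]
  [DecidableRel ((· ≤ ·) : P → P → Prop)] (φ : G →* (P ≃o P))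

instance (x y : P) : Fintype (x ⟶ y) := show Fintype (ULift (PLift (x ≤ y))) from inferInstance

instance (x y : P) : DecidableEq (x ⟶ y) :=
  show DecidableEq (ULift (PLift (x ≤ y))) from inferInstance

instance : Fintype (Transporter G P φ) := show Fintype P from inferInstance

instance : DecidableEq (Transporter G P φ) := show DecidableEq P from inferInstance

instance (x y : Transporter G P φ) : Fintype (x ⟶ y) :=
  show Fintype { g : G // φ g (x : P) ≤ (y : P) } from
    @Subtype.fintype _ _ (fun g => ‹DecidableRel ((· ≤ ·) : P → P → Prop)› _ _) _

instance (x y : Transporter G P φ) : DecidableEq (x ⟶ y) :=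
  show DecidableEq { g : G // φ g (x : P) ≤ (y : P) } from inferInstance

/-- The action of `g ∈ G` on a basis element `(x ≤ y)` of the incidence algebra `kP`:
`g · (x ≤ y) = (gx ≤ gy)`. -/
def gMor (g : G) (q : CatMor P) : CatMor P :=
  ⟨φ g q.1, φ g q.2.1, homOfLE ((φ g).monotone (leOfHom q.2.2))⟩

/-- The underlying vector space of the skew group algebra `kP[G] = kP ⊗_k kG`. -/
def SkewAlgebra (k : Type*) (P : Type*) [PartialOrder P] (G : Type*) : Type _ :=
  (CatMor P × G) → k

instance : AddCommGroup (SkewAlgebra k P G) := Pi.addCommGroup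
instance : Module k (SkewAlgebra k P G) := Pi.module _ _ _

/-- The multiplication of the skew group algebra,
`(a₁ ⊗ g₁) * (a₂ ⊗ g₂) = a₁ (g₁ · a₂) ⊗ g₁g₂`. -/
def skewMul (a b : SkewAlgebra k P G) : SkewAlgebra k P G := fun mg =>
  ∑ p : CatMor P, ∑ q : CatMor P, ∑ g₁ : G,
    if h : (gMor φ g₁ q).2.1 = p.1 then
      (if (⟨(gMor φ g₁ q).1, p.2.1, ((gMor φ g₁ q).2.2 ≫ eqToHom h) ≫ p.2.2⟩ : CatMor P) = mg.1
        then a (p, g₁) * b (q, g₁⁻¹ * mg.2) else 0)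
    else 0

/-- The identity `∑_x (x ≤ x) ⊗ 1` of the skew group algebra. -/
def skewOne : SkewAlgebra k P G := ∑ x : P, Pi.single ((⟨x, x, 𝟙 x⟩ : CatMor P), (1 : G)) 1

/-- The map `k(G∝P) → kP[G]`, `(g, gx ≤ y) ↦ (gx ≤ y) ⊗ g` on basis elements. -/
def transToSkew (a : CatAlgebra k (Transporter G P φ)) : SkewAlgebra k P G := fun mg =>
  a ⟨φ mg.2⁻¹ mg.1.1, mg.1.2.1, ⟨mg.2, by
    rw [map_inv, RelIso.apply_inv_self]
    exact leOfHom mg.1.2.2⟩⟩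

lemma tmor_ext {m m' : CatMor (Transporter G P φ)} (h1 : m.1 = m'.1)
    (h2 : m.2.1 = m'.2.1) (h3 : m.2.2.1 = m'.2.2.1) : m = m' := by
  obtain ⟨x, y, g⟩ := m
  obtain ⟨x', y', g'⟩ := m'
  dsimp at h1 h2 h3
  subst h1; subst h2
  cases Subtype.ext h3
  rfl

lemma tmor_eq_iff {m m' : CatMor (Transporter G P φ)} :
    m = m' ↔ m.1 = m'.1 ∧ m.2.1 = m'.2.1 ∧ m.2.2.1 = m'.2.2.1 := by
  constructor
  · rintro rfl; exact ⟨rfl, rfl, rfl⟩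
  · rintro ⟨h1, h2, h3⟩; exact tmor_ext φ h1 h2 h3

lemma pmor_ext {m m' : CatMor P} (h1 : m.1 = m'.1) (h2 : m.2.1 = m'.2.1) : m = m' := by
  obtain ⟨x, y, f⟩ := m
  obtain ⟨x', y', f'⟩ := m'
  dsimp at h1 h2
  subst h1; subst h2
  obtain ⟨⟨hf⟩⟩ := f
  obtain ⟨⟨hf'⟩⟩ := f'
  rfl

lemma pmor_eq_iff {m m' : CatMor P} : m = m' ↔ m.1 = m'.1 ∧ m.2.1 = m'.2.1 := by
  constructor
  · rintro rfl; exact ⟨rfl, rfl⟩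
  · rintro ⟨h1, h2⟩; exact pmor_ext h1 h2

lemma phi_mul_apply (g h : G) (x : P) : φ (g * h) x = φ g (φ h x) := by
  rw [map_mul]; rfl

lemma phi_apply_inv (g : G) (x : P) : φ g (φ g⁻¹ x) = x := by
  rw [← phi_mul_apply, mul_inv_cancel, map_one]; rfl

lemma phi_inv_apply (g : G) (x : P) : φ g⁻¹ (φ g x) = x := by
  rw [← phi_mul_apply, inv_mul_cancel, map_one]; rfl

/-- The bijection between morphisms of the transporter category and `Mor P × G`. -/
def morEquiv : CatMor (Transporter G P φ) ≃ (CatMor P × G) where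
  toFun m := (⟨φ m.2.2.1 m.1, m.2.1, homOfLE m.2.2.2⟩, m.2.2.1)
  invFun mg := ⟨φ mg.2⁻¹ mg.1.1, mg.1.2.1, ⟨mg.2, by
    rw [map_inv, RelIso.apply_inv_self]
    exact leOfHom mg.1.2.2⟩⟩
  left_inv m := tmor_ext φ (phi_inv_apply φ _ _) rfl rfl
  right_inv mg := Prod.ext (pmor_ext (phi_apply_inv φ _ _) rfl) rfl

lemma transToSkew_apply (a : CatAlgebra k (Transporter G P φ)) (mg : CatMor P × G) :
    transToSkew φ a mg = a ((morEquiv φ).symm mg) := rfl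

lemma tcomp_val {x y z : Transporter G P φ} (f : x ⟶ y) (g : y ⟶ z) :
    (f ≫ g).1 = g.1 * f.1 := rfl

lemma teqToHom_val {x y : Transporter G P φ} (h : x = y) : (eqToHom h).1 = 1 := by
  subst h; rfl

/-- There is a `k`-algebra isomorphism `k(G∝P) ≅ kP[G]` given on basis
elements by `(g, gx ≤ y) ↦ (gx ≤ y) ⊗ g`. -/
theorem Transporter.catAlgebra_iso_skewGroupAlgebra :
    Function.Bijective (transToSkew (k := k) φ) ∧
    (∀ a b : CatAlgebra k (Transporter G P φ),
      transToSkew φ (a + b) = transToSkew φ a + transToSkew φ b) ∧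
    (∀ (r : k) (a : CatAlgebra k (Transporter G P φ)),
      transToSkew φ (r • a) = r • transToSkew φ a) ∧
    (∀ a b : CatAlgebra k (Transporter G P φ),
      transToSkew φ (catMul a b) = skewMul φ (transToSkew φ a) (transToSkew φ b)) ∧
    (transToSkew φ (catOne : CatAlgebra k (Transporter G P φ)) = skewOne) ∧
    (∀ m : CatMor (Transporter G P φ),
      transToSkew φ (catSingle m) =
        Pi.single ((⟨φ m.2.2.1 m.1, m.2.1, homOfLE m.2.2.2⟩ : CatMor P), m.2.2.1) (1 : k)) := by
  refine ⟨?_, fun a b => rfl, fun r a => rfl, ?_, ?_, ?_⟩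
  · exact Equiv.bijective ⟨transToSkew φ, fun b m => b ((morEquiv φ) m),
      fun a => funext fun m => congrArg a ((morEquiv φ).symm_apply_apply m),
      fun b => funext fun mg => congrArg b ((morEquiv φ).apply_symm_apply mg)⟩
  · -- multiplication
    intro a b
    funext mg
    rw [transToSkew_apply]
    show catMul a b ((morEquiv φ).symm mg)
      = skewMul φ (transToSkew φ a) (transToSkew φ b) mg
    rw [catMul, skewMul]
    -- the generic term of the left-hand sum
    set σ : CatMor P × G → CatMor (Transporter G P φ) := ⇑(morEquiv φ).symm with hσ
    set T : CatMor (Transporter G P φ) → CatMor (Transporter G P φ) → k := fun p' q' =>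
      if h : q'.2.1 = p'.1 then
        (if (⟨q'.1, p'.2.1, (q'.2.2 ≫ eqToHom h) ≫ p'.2.2⟩ :
            CatMor (Transporter G P φ)) = (morEquiv φ).symm mg then a p' * b q' else 0)
      else 0 with hT
    -- vanishing of terms with the wrong group element
    have hvanish : ∀ (p q : CatMor P) (g₁ g₂ : G), g₂ ≠ g₁⁻¹ * mg.2 →
        T (σ (p, g₁)) (σ (q, g₂)) = 0 := by
      intro p q g₁ g₂ hne
      rw [hT]
      dsimp only
      split_ifs with h h2
      · exfalso
        have hval := congrArg (fun m : CatMor (Transporter G P φ) => m.2.2.1) h2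
        simp only [tcomp_val, teqToHom_val, one_mul] at hval
        have hval' : g₁ * g₂ = mg.2 := hval
        exact hne (by rw [← hval', inv_mul_cancel_left])
      · rfl
      · rfl
    -- the main pointwise identity
    have hpt : ∀ (p q : CatMor P) (g₁ : G),
        T (σ (p, g₁)) (σ (q, g₁⁻¹ * mg.2)) =
        (if h : (gMor φ g₁ q).2.1 = p.1 then
          (if (⟨(gMor φ g₁ q).1, p.2.1, ((gMor φ g₁ q).2.2 ≫ eqToHom h) ≫ p.2.2⟩ :
              CatMor P) = mg.1
            then transToSkew φ a (p, g₁) * transToSkew φ b (q, g₁⁻¹ * mg.2) else 0)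
        else 0) := by
      intro p q g₁
      rw [hT]
      dsimp only
      have hc : ((σ (q, g₁⁻¹ * mg.2)).2.1 = (σ (p, g₁)).1) ↔ ((gMor φ g₁ q).2.1 = p.1) := by
        show (q.2.1 = φ g₁⁻¹ p.1) ↔ (φ g₁ q.2.1 = p.1)
        constructor
        · rintro h; rw [h, phi_apply_inv]
        · rintro h; rw [← h, phi_inv_apply]
      by_cases h1 : (gMor φ g₁ q).2.1 = p.1
      · rw [dif_pos (hc.mpr h1), dif_pos h1]
        have hifc : ((⟨(σ (q, g₁⁻¹ * mg.2)).1, (σ (p, g₁)).2.1,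
              ((σ (q, g₁⁻¹ * mg.2)).2.2 ≫ eqToHom (hc.mpr h1)) ≫ (σ (p, g₁)).2.2⟩ :
              CatMor (Transporter G P φ)) = (morEquiv φ).symm mg) ↔
            ((⟨(gMor φ g₁ q).1, p.2.1,
              ((gMor φ g₁ q).2.2 ≫ eqToHom h1) ≫ p.2.2⟩ : CatMor P) = mg.1) := by
          rw [tmor_eq_iff, pmor_eq_iff]
          simp only [hσ, morEquiv, Equiv.coe_fn_symm_mk, tcomp_val, teqToHom_val, one_mul,
            gMor]
          show (φ (g₁⁻¹ * mg.2)⁻¹ q.1 = φ mg.2⁻¹ mg.1.1 ∧ p.2.1 = mg.1.2.1 ∧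
              g₁ * (g₁⁻¹ * mg.2) = mg.2) ↔ (φ g₁ q.1 = mg.1.1 ∧ p.2.1 = mg.1.2.1)
          simp [mul_inv_rev, phi_mul_apply, and_assoc]
        by_cases h2 : (⟨(gMor φ g₁ q).1, p.2.1,
            ((gMor φ g₁ q).2.2 ≫ eqToHom h1) ≫ p.2.2⟩ : CatMor P) = mg.1
        · rw [if_pos (hifc.mpr h2), if_pos h2]
          rfl
        · rw [if_neg (fun hx => h2 (hifc.mp hx)), if_neg h2]
      · rw [dif_neg (fun hx => h1 (hc.mp hx)), dif_neg h1]
    calc (∑ p', ∑ q', T p' q')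
        = ∑ pg : CatMor P × G, ∑ qg : CatMor P × G, T (σ pg) (σ qg) := by
          rw [← Equiv.sum_comp (morEquiv φ).symm (fun p' => ∑ q', T p' q')]
          exact Finset.sum_congr rfl fun pg _ =>
            (Equiv.sum_comp (morEquiv φ).symm (fun q' => T (σ pg) q')).symm
      _ = ∑ p : CatMor P, ∑ g₁ : G, ∑ q : CatMor P, ∑ g₂ : G, T (σ (p, g₁)) (σ (q, g₂)) := by
          rw [Fintype.sum_prod_type]
          exact Finset.sum_congr rfl fun p _ => Finset.sum_congr rfl fun g₁ _ =>
            Fintype.sum_prod_type _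
      _ = ∑ p : CatMor P, ∑ q : CatMor P, ∑ g₁ : G, ∑ g₂ : G, T (σ (p, g₁)) (σ (q, g₂)) := by
          exact Finset.sum_congr rfl fun p _ => Finset.sum_comm
      _ = ∑ p : CatMor P, ∑ q : CatMor P, ∑ g₁ : G, T (σ (p, g₁)) (σ (q, g₁⁻¹ * mg.2)) := by
          refine Finset.sum_congr rfl fun p _ => Finset.sum_congr rfl fun q _ =>
            Finset.sum_congr rfl fun g₁ _ => ?_
          exact Finset.sum_eq_single _ (fun g₂ _ h => hvanish p q g₁ g₂ h)
            (fun h => absurd (Finset.mem_univ _) h)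
      _ = _ := Finset.sum_congr rfl fun p _ => Finset.sum_congr rfl fun q _ =>
            Finset.sum_congr rfl fun g₁ _ => hpt p q g₁
  · -- one
    funext mg
    rw [transToSkew_apply]
    show catOne ((morEquiv φ).symm mg) = skewOne mg
    rw [catOne, skewOne]
    erw [Finset.sum_apply, Finset.sum_apply]
    refine Finset.sum_congr rfl fun x _ => ?_
    have he : (morEquiv φ) ⟨x, x, 𝟙 x⟩ =
        ((⟨_, _, 𝟙 (show P from x)⟩ : CatMor P), (1 : G)) :=
      Prod.ext (pmor_ext (show φ (1 : G) x = x by rw [map_one]; rfl) rfl) rfl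
    rw [catSingle, Pi.single_apply, Pi.single_apply]
    simp only [Equiv.symm_apply_eq, he]
  · -- single
    intro m
    funext mg
    rw [transToSkew_apply]
    show Pi.single m 1 ((morEquiv φ).symm mg) = _
    rw [Pi.single_apply, Pi.single_apply]
    simp only [Equiv.symm_apply_eq]
    rfl

end Skew
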